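/- Let f(x) = wᵀx + b be a linear classifier on ℝᵈ with w ≠ 0, f(x) ≠ 0, let ε ∈ (0, 1/3), and v ~ N(0, Σ) with Σ positive definite. If |α| > (1/√(1-√(3ε))) · (‖w‖₂/‖√Σ w‖₂) · |f(x)|/‖w‖₂, then P(f(x)·f(x+αv) ≤ 0) > ε. -/

import Mathlib

open MeasureTheory ProbabilityTheory Matrix Finset
open scoped MatrixOrder

open Real in
private lemma gaussianPDFReal_mul_eq (v1 v2 : NNReal) (h1 : v1 ≠ 0) (h2 : v2 ≠ 0) (z x : ℝ) :
    gaussianPDFReal 0 v1 x * gaussianPDFReal 0 v2 (z - x)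
      = gaussianPDFReal 0 (v1 + v2) z
        * gaussianPDFReal (z * v1 / (v1 + v2)) (NNReal.mk (v1 * v2 / (v1 + v2)) (by positivity)) x := by
  have hv1 : (0:ℝ) < v1 := lt_of_le_of_ne v1.coe_nonneg (by exact_mod_cast (Ne.symm h1))
  have hv2 : (0:ℝ) < v2 := lt_of_le_of_ne v2.coe_nonneg (by exact_mod_cast (Ne.symm h2))
  have hv12 : (0:ℝ) < (v1:ℝ) + v2 := by linarith
  have hπ : (0:ℝ) < π := Real.pi_pos
  simp only [gaussianPDFReal, NNReal.coe_mk, NNReal.coe_add, sub_zero]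
  rw [mul_mul_mul_comm, mul_mul_mul_comm ((√(2 * π * ((v1:ℝ) + v2)))⁻¹), ← Real.exp_add,
    ← Real.exp_add]
  congr 1
  · rw [← mul_inv, ← mul_inv, _root_.inv_inj, ← Real.sqrt_mul (by positivity),
      ← Real.sqrt_mul (by positivity)]
    congr 1
    field_simp
  · congr 1
    field_simp
    ring

private lemma gaussian_conv (v1 v2 : NNReal) :
    Measure.map (fun p : ℝ × ℝ => p.1 + p.2) ((gaussianReal 0 v1).prod (gaussianReal 0 v2))
      = gaussianReal 0 (v1 + v2) := by
  by_cases h1 : v1 = 0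
  · subst h1
    rw [gaussianReal_zero_var, Measure.dirac_prod, Measure.map_map (by fun_prop) (by fun_prop)]
    have : ((fun p : ℝ × ℝ => p.1 + p.2) ∘ Prod.mk (0:ℝ)) = id := by funext y; simp
    rw [this, Measure.map_id, zero_add]
  by_cases h2 : v2 = 0
  · subst h2
    rw [gaussianReal_zero_var, Measure.prod_dirac, Measure.map_map (by fun_prop) (by fun_prop)]
    have : ((fun p : ℝ × ℝ => p.1 + p.2) ∘ (fun x : ℝ => (x, (0:ℝ)))) = id := by funext y; simp
    rw [this, Measure.map_id, add_zero]
  have h12 : v1 + v2 ≠ 0 := by simp [h1, h2]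
  have hmeas2 : Measurable (fun p : ℝ × ℝ => gaussianPDF p.1 v2 p.2) := by
    have : (fun p : ℝ × ℝ => gaussianPDF p.1 v2 p.2)
        = fun p : ℝ × ℝ => gaussianPDF 0 v2 (p.2 - p.1) := by
      funext p
      simp only [gaussianPDF, gaussianPDFReal_sub, zero_add]
    rw [this]
    exact (measurable_gaussianPDF 0 v2).comp (measurable_snd.sub measurable_fst)
  ext s hs
  rw [Measure.map_apply (by fun_prop) hs,
    Measure.prod_apply (measurable_add hs)]
  have key : ∀ x : ℝ, gaussianReal 0 v2 (Prod.mk x ⁻¹' ((fun p : ℝ × ℝ => p.1 + p.2) ⁻¹' s))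
      = ∫⁻ z in s, gaussianPDF x v2 z := by
    intro x
    have : Prod.mk x ⁻¹' ((fun p : ℝ × ℝ => p.1 + p.2) ⁻¹' s) = (fun y => x + y) ⁻¹' s := rfl
    rw [this, ← Measure.map_apply (by fun_prop) hs, gaussianReal_map_const_add,
      zero_add, gaussianReal_apply _ h2]
  simp_rw [key]
  rw [gaussianReal_of_var_ne_zero _ h1,
    lintegral_withDensity_eq_lintegral_mul _ (measurable_gaussianPDF _ _)
      (Measurable.lintegral_prod_right (f := fun x z => gaussianPDF x v2 z) hmeas2)]
  simp only [Pi.mul_apply]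
  have step1 : ∀ x, gaussianPDF 0 v1 x * ∫⁻ z in s, gaussianPDF x v2 z
      = ∫⁻ z in s, gaussianPDF 0 v1 x * gaussianPDF x v2 z := fun x =>
    (lintegral_const_mul _ (measurable_gaussianPDF x v2)).symm
  simp_rw [step1]
  rw [lintegral_lintegral_swap
    (((measurable_gaussianPDF 0 v1).comp measurable_fst).mul hmeas2).aemeasurable]
  have inner : ∀ z, ∫⁻ x, gaussianPDF 0 v1 x * gaussianPDF x v2 z
      = gaussianPDF 0 (v1 + v2) z := by
    intro z
    have hv' : (NNReal.mk ((v1:ℝ) * v2 / (v1 + v2)) (by positivity)) ≠ 0 := by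
      have hv1 : (0:ℝ) < v1 := lt_of_le_of_ne v1.coe_nonneg (by exact_mod_cast (Ne.symm h1))
      have hv2 : (0:ℝ) < v2 := lt_of_le_of_ne v2.coe_nonneg (by exact_mod_cast (Ne.symm h2))
      exact NNReal.coe_ne_zero.mp (ne_of_gt (by rw [NNReal.coe_mk]; positivity))
    have eq1 : ∀ x, gaussianPDF 0 v1 x * gaussianPDF x v2 z
        = gaussianPDF 0 (v1 + v2) z
          * gaussianPDF ((z : ℝ) * v1 / (v1 + v2)) (NNReal.mk ((v1:ℝ) * v2 / (v1 + v2)) (by positivity)) x := by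
      intro x
      simp only [gaussianPDF]
      rw [← ENNReal.ofReal_mul (gaussianPDFReal_nonneg _ _ _),
        ← ENNReal.ofReal_mul (gaussianPDFReal_nonneg _ _ _)]
      congr 1
      have : gaussianPDFReal x v2 z = gaussianPDFReal 0 v2 (z - x) := by
        rw [gaussianPDFReal_sub, zero_add]
      rw [this, gaussianPDFReal_mul_eq v1 v2 h1 h2 z x]
    simp_rw [eq1]
    rw [lintegral_const_mul _ (measurable_gaussianPDF _ _),
      lintegral_gaussianPDF_eq_one _ hv', mul_one]
  simp_rw [inner]
  rw [← gaussianReal_apply _ h12]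

private lemma gaussian_map_sum (n : ℕ) (u : Fin n → ℝ) :
    Measure.map (fun g : Fin n → ℝ => ∑ i, u i * g i)
        (Measure.pi fun _ : Fin n => gaussianReal 0 1)
      = gaussianReal 0 (∑ i, (NNReal.mk ((u i)^2) (sq_nonneg _))) := by
  induction n with
  | zero =>
      simp only [Finset.univ_eq_empty, Finset.sum_empty]
      rw [Measure.map_const]
      simp [gaussianReal_zero_var]
  | succ n ih =>
      have mp := measurePreserving_piFinSuccAbove (fun _ : Fin (n+1) => gaussianReal 0 1) 0
      set e := MeasurableEquiv.piFinSuccAbove (fun _ : Fin (n+1) => ℝ) 0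
      have h1 : Measure.map (fun g : Fin (n+1) → ℝ => ∑ i, u i * g i)
          (Measure.pi fun _ => gaussianReal 0 1)
          = Measure.map ((fun p : ℝ × (Fin n → ℝ) => u 0 * p.1 + ∑ j, u j.succ * p.2 j) ∘ e)
            (Measure.pi fun _ => gaussianReal 0 1) := by
        congr 1
        funext g
        simp [Function.comp_apply, e, MeasurableEquiv.piFinSuccAbove_apply,
          Fin.insertNthEquiv, Equiv.coe_fn_symm_mk, Fin.sum_univ_succ, Fin.succAbove_zero,
          Fin.tail]
      rw [h1, ← Measure.map_map (by fun_prop) e.measurable, mp.map_eq]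
      have h2 : (fun p : ℝ × (Fin n → ℝ) => u 0 * p.1 + ∑ j, u j.succ * p.2 j)
          = (fun q : ℝ × ℝ => q.1 + q.2) ∘
            (Prod.map (fun x : ℝ => u 0 * x) (fun g : Fin n → ℝ => ∑ j, u j.succ * g j)) := rfl
      rw [h2, ← Measure.map_map (by fun_prop) (by fun_prop),
        ← Measure.map_prod_map _ _ (by fun_prop) (by fun_prop),
        ih (fun j => u j.succ)]
      have h3 : Measure.map (fun x : ℝ => u 0 * x) (gaussianReal 0 1)
          = gaussianReal 0 (NNReal.mk ((u 0)^2) (sq_nonneg _)) := by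
        rw [gaussianReal_map_const_mul (u 0)]
        norm_num
      rw [h3, gaussian_conv]
      congr 1
      rw [Fin.sum_univ_succ]

private lemma gaussianReal_neg_symm (v : NNReal) :
    (gaussianReal 0 v).map (fun x : ℝ => -1 * x) = gaussianReal 0 v := by
  rw [gaussianReal_map_const_mul (-1)]
  norm_num

private lemma gaussianReal_Ici_zero (v : NNReal) (hv : v ≠ 0) :
    gaussianReal 0 v (Set.Ici 0) = ENNReal.ofReal (1/2) := by
  set ν := gaussianReal 0 v
  have h0 : ν {(0:ℝ)} = 0 :=
    gaussianReal_absolutelyContinuous 0 hv (measure_singleton 0)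
  have hsymm : ν (Set.Iic 0) = ν (Set.Ici 0) := by
    have : Set.Iic (0:ℝ) = (fun x : ℝ => -1 * x) ⁻¹' (Set.Ici 0) := by
      ext y; simp
    rw [this, ← Measure.map_apply (by fun_prop) measurableSet_Ici, gaussianReal_neg_symm]
  have hunion : ν (Set.Ici 0) + ν (Set.Iic 0) = 1 + ν {(0:ℝ)} := by
    rw [← measure_union_add_inter _ measurableSet_Iic]
    have h1 : Set.Ici (0:ℝ) ∪ Set.Iic 0 = Set.univ := by
      ext y; simp [le_total 0 y]
    have h2 : Set.Ici (0:ℝ) ∩ Set.Iic 0 = {0} := by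
      ext y; simp [le_antisymm_iff, and_comm]
    rw [h1, h2, measure_univ]
  rw [hsymm, h0, add_zero] at hunion
  have h2 : (2:ENNReal) * ν (Set.Ici 0) = 1 := by rw [two_mul, hunion]
  rw [ENNReal.ofReal_div_of_pos (by norm_num), ENNReal.ofReal_one, ENNReal.ofReal_ofNat,
    ENNReal.eq_div_iff (by norm_num) (by norm_num)]
  exact h2

open Real in
private lemma gaussianReal_Ici_lower (v : NNReal) (hv : v ≠ 0) (t : ℝ) (ht : 0 ≤ t) :
    ENNReal.ofReal (1/2 - t / Real.sqrt (2 * π * v)) ≤ gaussianReal 0 v (Set.Ici t) := by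
  set ν := gaussianReal 0 v with hν
  have hsplit : ν (Set.Ici 0) = ν (Set.Ico 0 t) + ν (Set.Ici t) := by
    rw [← measure_union (by
        exact Set.disjoint_left.mpr fun y hy hy2 => absurd hy2 (not_le.mpr hy.2))
      measurableSet_Ici]
    congr 1
    rw [Set.Ico_union_Ici_eq_Ici ht]
  have hbound : ν (Set.Ico 0 t) ≤ ENNReal.ofReal (t / Real.sqrt (2 * π * v)) := by
    rw [hν, gaussianReal_apply _ hv]
    have hle : ∀ x : ℝ, gaussianPDF 0 v x ≤ ENNReal.ofReal ((Real.sqrt (2 * π * v))⁻¹) := by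
      intro x
      refine ENNReal.ofReal_le_ofReal ?_
      rw [gaussianPDFReal]
      have : rexp (-(x - 0)^2 / (2 * v)) ≤ 1 := by
        rw [Real.exp_le_one_iff]
        have hvpos : (0:ℝ) < v := lt_of_le_of_ne v.coe_nonneg (by exact_mod_cast (Ne.symm hv))
        have := sq_nonneg (x - 0)
        apply div_nonpos_of_nonpos_of_nonneg <;> nlinarith
      nlinarith [Real.sqrt_nonneg (2 * π * v), this, Real.exp_pos (-(x - 0)^2 / (2 * v)),
        inv_nonneg.mpr (Real.sqrt_nonneg (2 * π * v))]
    calc ∫⁻ x in Set.Ico 0 t, gaussianPDF 0 v x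
        ≤ ∫⁻ _ in Set.Ico 0 t, ENNReal.ofReal ((Real.sqrt (2 * π * v))⁻¹) :=
          lintegral_mono fun x => hle x
      _ = ENNReal.ofReal ((Real.sqrt (2 * π * v))⁻¹) * volume (Set.Ico 0 t) := by
          rw [setLIntegral_const]
      _ = ENNReal.ofReal (t / Real.sqrt (2 * π * v)) := by
          rw [Real.volume_Ico, ← ENNReal.ofReal_mul (by positivity), sub_zero,
            div_eq_mul_inv, mul_comm]
  have hhalf := gaussianReal_Ici_zero v hv
  rw [hsplit] at hhalf
  have : ENNReal.ofReal (1/2) ≤ ENNReal.ofReal (t / Real.sqrt (2 * π * v)) + ν (Set.Ici t) := by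
    rw [← hhalf]; exact add_le_add_left hbound _
  have final : ENNReal.ofReal (1/2) - ENNReal.ofReal (t / Real.sqrt (2 * π * v))
      ≤ ν (Set.Ici t) := tsub_le_iff_left.mpr this
  rwa [← ENNReal.ofReal_sub _ (by positivity)] at final

open Real in
private lemma key_numeric (ε : ℝ) (h0 : 0 < ε) (h1 : ε < 1/3) :
    Real.sqrt (1 - Real.sqrt (3*ε)) ≤ Real.sqrt (2*π) * (1/2 - ε) := by
  set s := Real.sqrt (3*ε) with hs
  have hs0 : 0 ≤ s := Real.sqrt_nonneg _
  have hs2 : s^2 = 3*ε := Real.sq_sqrt (by linarith)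
  have hs1 : s < 1 := by nlinarith [hs2]
  have hπ : π > 3.141592 := Real.pi_gt_d6
  have key : 1 - s ≤ 2*π*(1/2 - ε)^2 := by
    have hε : ε = s^2/3 := by linarith
    rw [hε]
    nlinarith [sq_nonneg (s - 0.9), sq_nonneg (s^2 - 0.81), sq_nonneg s, sq_nonneg (s-1),
      sq_nonneg (s^2 - s), mul_nonneg hs0 (sq_nonneg (s-1))]
  calc Real.sqrt (1 - s) ≤ Real.sqrt (2*π*(1/2 - ε)^2) := Real.sqrt_le_sqrt key
    _ = Real.sqrt (2*π) * (1/2 - ε) := by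
        rw [Real.sqrt_mul (by positivity), Real.sqrt_sq (by linarith)]

set_option maxHeartbeats 1000000 in
/-- Gaussian-noise robustness, upper bound: for a linear classifier `f(z) = wᵀz + b` and
Gaussian noise `v = √Σ g` with `g` i.i.d. standard Gaussian, if
`|α| > √(1/(1-√(3ε))) · (‖w‖₂/‖√Σ w‖₂) · |f(x)|/‖w‖₂` then the probability that the
sign of `f` changes is `> ε`. -/
theorem gaussian_noise_robustness_upper (d : ℕ) (w : Fin d → ℝ) (hw : w ≠ 0) (b : ℝ)
    (x : Fin d → ℝ) (hfx : w ⬝ᵥ x + b ≠ 0) (ε : ℝ) (hε : ε ∈ Set.Ioo (0 : ℝ) (1 / 3))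
    (S : Matrix (Fin d) (Fin d) ℝ) (hS : S.PosDef) (α : ℝ)
    (hα : |α| > (1 / Real.sqrt (1 - Real.sqrt (3 * ε)))
        * (Real.sqrt (∑ i, w i ^ 2)
            / Real.sqrt (∑ i, ((CFC.sqrt S).mulVec w) i ^ 2))
        * (|w ⬝ᵥ x + b| / Real.sqrt (∑ i, w i ^ 2))) :
    ENNReal.ofReal ε
      < (Measure.pi fun _ : Fin d => gaussianReal 0 1)
          {g | (w ⬝ᵥ x + b) * (w ⬝ᵥ (x + α • (CFC.sqrt S).mulVec g) + b) ≤ 0} := by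
  obtain ⟨hε0, hε3⟩ := hε
  set M := CFC.sqrt S with hM
  set u := M.mulVec w with hu
  set c := w ⬝ᵥ x + b with hc
  -- basic facts
  have hMT : Mᵀ = M := by
    rw [← Matrix.conjTranspose_eq_transpose_of_trivial]
    exact (Matrix.nonneg_iff_posSemidef.mp (CFC.sqrt_nonneg S)).isHermitian
  have hupos : 0 < ∑ i, u i ^ 2 := by
    have e1 : ∑ i, u i ^ 2 = u ⬝ᵥ u := by
      simp [dotProduct, sq]
    have e2 : u ⬝ᵥ u = w ⬝ᵥ S.mulVec w := by
      rw [hu, Matrix.dotProduct_mulVec, Matrix.vecMul_mulVec, hMT,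
        CFC.sqrt_mul_sqrt_self S (Matrix.nonneg_iff_posSemidef.mpr hS.posSemidef), ← Matrix.dotProduct_mulVec]
    have := (posDef_iff_dotProduct_mulVec.mp hS).2 hw
    rw [star_trivial] at this
    rw [e1, e2]; exact this
  have hWpos : 0 < ∑ i, w i ^ 2 := by
    obtain ⟨i, hi⟩ := Function.ne_iff.mp hw
    exact Finset.sum_pos' (fun j _ => sq_nonneg _)
      ⟨i, Finset.mem_univ i, lt_of_le_of_ne (sq_nonneg _) (Ne.symm (pow_ne_zero 2 hi))⟩
  have hcpos : 0 < |c| := abs_pos.mpr hfx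
  have hs1 : Real.sqrt (3 * ε) < 1 := by
    rw [show (1:ℝ) = Real.sqrt 1 by simp]
    exact Real.sqrt_lt_sqrt (by linarith) (by linarith)
  have h1s : 0 < 1 - Real.sqrt (3 * ε) := by linarith
  set σ := Real.sqrt (∑ i, u i ^ 2) with hσ
  have hσpos : 0 < σ := Real.sqrt_pos.mpr hupos
  have hsqW : 0 < Real.sqrt (∑ i, w i ^ 2) := Real.sqrt_pos.mpr hWpos
  have hsq1s : 0 < Real.sqrt (1 - Real.sqrt (3 * ε)) := Real.sqrt_pos.mpr h1s
  have hRHS : (1 / Real.sqrt (1 - Real.sqrt (3 * ε)))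
        * (Real.sqrt (∑ i, w i ^ 2) / σ) * (|c| / Real.sqrt (∑ i, w i ^ 2))
      = |c| / (Real.sqrt (1 - Real.sqrt (3 * ε)) * σ) := by
    rw [show (1 / Real.sqrt (1 - Real.sqrt (3 * ε)))
        * (Real.sqrt (∑ i, w i ^ 2) / σ) * (|c| / Real.sqrt (∑ i, w i ^ 2))
      = |c| * (Real.sqrt (∑ i, w i ^ 2) / Real.sqrt (∑ i, w i ^ 2))
        / (Real.sqrt (1 - Real.sqrt (3 * ε)) * σ) from by ring,
      div_self (ne_of_gt hsqW), mul_one]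
  rw [hRHS] at hα
  have hαpos : 0 < |α| := lt_trans (by positivity) hα
  have hα0 : α ≠ 0 := fun h => by simp [h] at hαpos
  set t := |c| / |α| with htdef
  have ht0 : 0 ≤ t := by positivity
  have htlt : t < Real.sqrt (1 - Real.sqrt (3 * ε)) * σ := by
    rw [htdef, div_lt_iff₀ hαpos]
    have hα' := (div_lt_iff₀ (by positivity : (0:ℝ) < Real.sqrt (1 - Real.sqrt (3 * ε)) * σ)).mp hα
    nlinarith [hα']
  -- rewrite the event
  set T : (Fin d → ℝ) → ℝ := fun g => ∑ i, u i * g i with hT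
  have hTmeas : Measurable T :=
    Finset.measurable_sum _ (fun i _ => by fun_prop)
  have harr : ∀ g : Fin d → ℝ, w ⬝ᵥ (x + α • M.mulVec g) + b = c + α * T g := by
    intro g
    have hvm : Matrix.vecMul w M = u := by rw [← hMT, Matrix.vecMul_transpose]
    rw [dotProduct_add, dotProduct_smul, smul_eq_mul,
      Matrix.dotProduct_mulVec, hvm]
    simp only [hc, hT, dotProduct]
    ring
  have hset : {g : Fin d → ℝ | c * (w ⬝ᵥ (x + α • M.mulVec g) + b) ≤ 0}
      = T ⁻¹' {z : ℝ | c * (c + α * z) ≤ 0} := by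
    ext g
    simp only [Set.mem_setOf_eq, Set.mem_preimage, harr g]
  have hE : MeasurableSet {z : ℝ | c * (c + α * z) ≤ 0} :=
    measurableSet_le (by fun_prop) measurable_const
  rw [hset, ← Measure.map_apply hTmeas hE, hT, gaussian_map_sum d u]
  set V : NNReal := ∑ i, (NNReal.mk ((u i)^2) (sq_nonneg _)) with hV
  have hVcoe : (V : ℝ) = ∑ i, u i ^ 2 := by
    rw [hV, NNReal.coe_sum]
    exact Finset.sum_congr rfl fun i _ => rfl
  have hVne : V ≠ 0 := by
    refine NNReal.coe_ne_zero.mp ?_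
    rw [hVcoe]; exact ne_of_gt hupos
  clear_value V σ u M
  -- identify the set measure with that of Ici t
  have habs : |α| * |c| = |α * c| := (abs_mul α c).symm
  have hmeasure : gaussianReal 0 V {z : ℝ | c * (c + α * z) ≤ 0}
      = gaussianReal 0 V (Set.Ici t) := by
    rcases lt_or_gt_of_ne (mul_ne_zero hα0 hfx) with ha | ha
    · -- α * c < 0 : the set is Ici t
      congr 1
      ext z
      simp only [Set.mem_setOf_eq, Set.mem_Ici]
      have habs2 : |α| * |c| = -(α * c) := by rw [habs, abs_of_neg ha]
      have hc2 : c^2 = |c|^2 := (sq_abs c).symm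
      constructor
      · intro h
        rw [htdef, div_le_iff₀ hαpos]
        nlinarith
      · intro h
        rw [htdef, div_le_iff₀ hαpos] at h
        nlinarith
    · -- α * c > 0 : the set is Iic (-t)
      have hsetz : {z : ℝ | c * (c + α * z) ≤ 0} = Set.Iic (-t) := by
        ext z
        simp only [Set.mem_setOf_eq, Set.mem_Iic]
        have habs2 : |α| * |c| = α * c := by rw [habs, abs_of_pos ha]
        have hc2 : c^2 = |c|^2 := (sq_abs c).symm
        constructor
        · intro h
          rw [htdef, le_neg, div_le_iff₀ hαpos]
          nlinarith
        · intro h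
          rw [htdef, le_neg, div_le_iff₀ hαpos] at h
          nlinarith
      rw [hsetz]
      have hpre : (fun z : ℝ => -1 * z) ⁻¹' (Set.Iic (-t)) = Set.Ici t := by
        ext z
        simp only [Set.mem_preimage, Set.mem_Iic, Set.mem_Ici]
        constructor <;> intro h <;> linarith
      rw [← hpre, ← Measure.map_apply (by fun_prop) measurableSet_Iic,
        gaussianReal_neg_symm]
      -- now goal : gaussianReal 0 V (Iic (-t)) = gaussianReal 0 V (Iic (-t))? no:
  rw [hmeasure]
  -- lower bound
  have hlow := gaussianReal_Ici_lower V hVne t ht0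
  refine lt_of_lt_of_le ?_ hlow
  rw [ENNReal.ofReal_lt_ofReal_iff_of_nonneg (le_of_lt hε0)]
  -- numeric comparison
  have hsqrtV : Real.sqrt (2 * Real.pi * V) = Real.sqrt (2 * Real.pi) * σ := by
    rw [hσ, ← hVcoe, Real.sqrt_mul (by positivity)]
  have hq : t / Real.sqrt (2 * Real.pi * (V:ℝ))
      < Real.sqrt (1 - Real.sqrt (3 * ε)) / Real.sqrt (2 * Real.pi) := by
    rw [hsqrtV, div_lt_div_iff₀ (by positivity) (by positivity)]
    calc t * Real.sqrt (2 * Real.pi)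
        < (Real.sqrt (1 - Real.sqrt (3 * ε)) * σ) * Real.sqrt (2 * Real.pi) := by
          apply mul_lt_mul_of_pos_right htlt (by positivity)
      _ = Real.sqrt (1 - Real.sqrt (3 * ε)) * (Real.sqrt (2 * Real.pi) * σ) := by ring
  have hkey := key_numeric ε hε0 hε3
  have h2 : Real.sqrt (1 - Real.sqrt (3 * ε)) / Real.sqrt (2 * Real.pi) ≤ 1/2 - ε := by
    rw [div_le_iff₀ (by positivity)]
    calc Real.sqrt (1 - Real.sqrt (3 * ε)) ≤ Real.sqrt (2 * Real.pi) * (1/2 - ε) := hkey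
      _ = (1/2 - ε) * Real.sqrt (2 * Real.pi) := by ring
  linarith
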